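/- Under the assumption that |Δ_e f| ≤ 1{max(X_e, X'_e) = 1}·H_E(w_e, w'_e, w_v, w_u) for every edge e = {u,v} ∈ V_n^(2), where H_E : [0,∞)^4 → ℝ is measurable with J_E := max(1, E[H_E(w_e, w'_e, w_v, w_u)^6]) < ∞, one has Σ_{e ∈ V_n^(2)} E[|Δ_e f|³] ≤ 2·n·θ·Γ_{1,n}²·J_E^{1/2}. -/

import Mathlib

open MeasureTheory ProbabilityTheory Real
open scoped ENNReal

noncomputable section
open Classical

/-- ordered representatives of the unordered pairs `V_n^(2)`. -/
abbrev EdgeIdx (n : ℕ) := {p : Fin n × Fin n // p.1 < p.2}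

/-- sites: vertices and (possible) edges, `V_n ∪ V_n^(2)`. -/
abbrev Site (n : ℕ) := Fin n ⊕ EdgeIdx n

/-- the data attached to a site: a weight for a vertex, an indicator plus a weight
for an edge. -/
abbrev SiteData (n : ℕ) : Site n → Type := fun s =>
  match s with
  | Sum.inl _ => ℝ
  | Sum.inr _ => Bool × ℝ

instance (n : ℕ) (s : Site n) : MeasurableSpace (SiteData n s) :=
  match s with
  | Sum.inl _ => inferInstanceAs (MeasurableSpace ℝ)
  | Sum.inr _ => inferInstanceAs (MeasurableSpace (Bool × ℝ))

/-- a configuration of a weighted graph on `Fin n`: edge indicators together with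
edge weights and vertex weights. -/
abbrev Conf (n : ℕ) := ∀ s : Site n, SiteData n s

/-- replace the data of `ξ` by that of `ξ'` at all sites in `F`. -/
def recomb {n : ℕ} (ξ ξ' : Conf n) (F : Set (Site n)) : Conf n :=
  fun s => if s ∈ F then ξ' s else ξ s

/-- the indicator of the (possible) edge `{a,b}` in a configuration. -/
def eInd {n : ℕ} (c : Conf n) (a b : Fin n) : Bool :=
  if h : a < b then (c (Sum.inr ⟨(a, b), h⟩)).1
  else if h : b < a then (c (Sum.inr ⟨(b, a), h⟩)).1
  else false

/-- the weight of the (possible) edge `{a,b}` in a configuration. -/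
def eWt {n : ℕ} (c : Conf n) (a b : Fin n) : ℝ :=
  if h : a < b then (c (Sum.inr ⟨(a, b), h⟩)).2
  else if h : b < a then (c (Sum.inr ⟨(b, a), h⟩)).2
  else 0

/-- the degree `|D_1(v)|` of a vertex in the graph of a configuration. -/
def deg {n : ℕ} (c : Conf n) (v : Fin n) : ℕ :=
  ∑ u : Fin n, if u ≠ v ∧ eInd c v u = true then 1 else 0

/-- `Γ_{p,n}` -/
def Gam (n : ℕ) (θ : ℝ) (W : Fin n → ℝ) (p : ℝ) : ℝ :=
  (∑ u : Fin n, W u ^ p) / (n * θ)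

/-- covariance of two real random variables. -/
def cov {Ω : Type} [MeasurableSpace Ω] (P : Measure Ω) (f g : Ω → ℝ) : ℝ :=
  (∫ ω, f ω * g ω ∂P) - (∫ ω, f ω ∂P) * (∫ ω, g ω ∂P)

lemma indep_triple {Ω β γ δ : Type*} [MeasurableSpace Ω]
    [MeasurableSpace β] [MeasurableSpace γ] [MeasurableSpace δ]
    (P : Measure Ω) [IsProbabilityMeasure P]
    {a : Ω → β} {b : Ω → γ} {c : Ω → δ}
    (ha : Measurable a) (hb : Measurable b) (hc : Measurable c)
    (hab : IndepFun a b P) (habc : IndepFun (fun ω => (a ω, b ω)) c P) :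
    IndepFun a (fun ω => (b ω, c ω)) P := by
  have hbc : IndepFun b c P := habc.comp measurable_snd measurable_id
  rw [indepFun_iff_map_prod_eq_prod_map_map ha.aemeasurable
    (hb.prodMk hc).aemeasurable]
  rw [indepFun_iff_map_prod_eq_prod_map_map (ha.prodMk hb).aemeasurable
    hc.aemeasurable] at habc
  rw [indepFun_iff_map_prod_eq_prod_map_map ha.aemeasurable hb.aemeasurable] at hab
  rw [indepFun_iff_map_prod_eq_prod_map_map hb.aemeasurable hc.aemeasurable] at hbc
  have h1 : (fun ω => (a ω, b ω, c ω))
      = (MeasurableEquiv.prodAssoc : (β × γ) × δ ≃ᵐ β × γ × δ)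
        ∘ (fun ω => ((a ω, b ω), c ω)) := rfl
  rw [h1, ← Measure.map_map MeasurableEquiv.prodAssoc.measurable
    ((ha.prodMk hb).prodMk hc), habc, hab, Measure.prodAssoc_prod, hbc]

theorem stmt14
    (n : ℕ) (hn : 1 ≤ n) (θ : ℝ) (hθ : 0 < θ)
    (W : Fin n → ℝ) (hW : ∀ v, 0 < W v)
    {Ω : Type} [MeasurableSpace Ω] (P : Measure Ω) [IsProbabilityMeasure P]
    (μE μV : Measure ℝ) [IsProbabilityMeasure μE] [IsProbabilityMeasure μV]
    (hμE : μE (Set.Iio 0) = 0) (hμV : μV (Set.Iio 0) = 0)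
    (ξ ξ' : Ω → Conf n)
    (hmeas : ∀ s, Measurable fun ω => ξ ω s)
    (hmeas' : ∀ s, Measurable fun ω => ξ' ω s)
    -- all the variables (edge indicators, edge weights, vertex weights, and their
    -- independent copies) are mutually independent ...
    (hindep : iIndepFun
      (fun (i : Site n × Bool) ω => if i.2 = true then ξ' ω i.1 else ξ ω i.1) P)
    -- ... where within an edge site the indicator and the weight are independent too
    (hindepE : ∀ e : EdgeIdx n,
      IndepFun (fun ω => (ξ ω (Sum.inr e)).1) (fun ω => (ξ ω (Sum.inr e)).2) P)
    (hindepE' : ∀ e : EdgeIdx n,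
      IndepFun (fun ω => (ξ' ω (Sum.inr e)).1) (fun ω => (ξ' ω (Sum.inr e)).2) P)
    -- distributions
    (hBer : ∀ e : EdgeIdx n,
      P {ω | (ξ ω (Sum.inr e)).1 = true}
        = ENNReal.ofReal (min (W e.1.1 * W e.1.2 / (n * θ)) 1))
    (hBer' : ∀ e : EdgeIdx n,
      P {ω | (ξ' ω (Sum.inr e)).1 = true}
        = ENNReal.ofReal (min (W e.1.1 * W e.1.2 / (n * θ)) 1))
    (hwE : ∀ e : EdgeIdx n, Measure.map (fun ω => (ξ ω (Sum.inr e)).2) P = μE)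
    (hwE' : ∀ e : EdgeIdx n, Measure.map (fun ω => (ξ' ω (Sum.inr e)).2) P = μE)
    (hwV : ∀ v : Fin n, Measure.map (fun ω => ξ ω (Sum.inl v)) P = μV)
    (hwV' : ∀ v : Fin n, Measure.map (fun ω => ξ' ω (Sum.inl v)) P = μV)
    (f : Conf n → ℝ) (hf : Measurable f)
    (HE : ℝ → ℝ → ℝ → ℝ → ℝ)
    (hHE : Measurable fun q : ℝ × ℝ × ℝ × ℝ => HE q.1 q.2.1 q.2.2.1 q.2.2.2)
    (JE : ℝ) (hJE1 : 1 ≤ JE)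
    (hJEint : ∀ e : EdgeIdx n, Integrable (fun ω =>
      (HE ((ξ ω (Sum.inr e)).2) ((ξ' ω (Sum.inr e)).2)
        (ξ ω (Sum.inl e.1.1)) (ξ ω (Sum.inl e.1.2))) ^ 6) P)
    (hJE : ∀ e : EdgeIdx n,
      (∫ ω, (HE ((ξ ω (Sum.inr e)).2) ((ξ' ω (Sum.inr e)).2)
        (ξ ω (Sum.inl e.1.1)) (ξ ω (Sum.inl e.1.2))) ^ 6 ∂P) ≤ JE)
    (hbound : ∀ (e : EdgeIdx n) (ω : Ω),
      |f (ξ ω) - f (recomb (ξ ω) (ξ' ω) {Sum.inr e})|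
        ≤ (if (ξ ω (Sum.inr e)).1 = true ∨ (ξ' ω (Sum.inr e)).1 = true then
            HE ((ξ ω (Sum.inr e)).2) ((ξ' ω (Sum.inr e)).2)
              (ξ ω (Sum.inl e.1.1)) (ξ ω (Sum.inl e.1.2))
          else 0)) :
    ∑ e : EdgeIdx n, ∫ ω, |f (ξ ω) - f (recomb (ξ ω) (ξ' ω) {Sum.inr e})| ^ 3 ∂P
      ≤ 2 * n * θ * Gam n θ W 1 ^ 2 * Real.sqrt JE := by
  have hnθ : (0:ℝ) < n * θ := by
    have : (0:ℝ) < n := by exact_mod_cast hn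
    positivity
  have hsJE : (0:ℝ) ≤ Real.sqrt JE := Real.sqrt_nonneg _
  have key : ∀ e : EdgeIdx n,
      ∫ ω, |f (ξ ω) - f (recomb (ξ ω) (ξ' ω) {Sum.inr e})| ^ 3 ∂P
        ≤ 2 * (W e.1.1 * W e.1.2 / (n * θ)) * Real.sqrt JE := by
    intro e
    set u := e.1.1 with hu
    set v := e.1.2 with hv
    set H₀ : Ω → ℝ := fun ω => HE ((ξ ω (Sum.inr e)).2) ((ξ' ω (Sum.inr e)).2)
        (ξ ω (Sum.inl u)) (ξ ω (Sum.inl v)) with hH₀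
    set G : Ω → ℝ := fun ω => max (H₀ ω) 0 with hG
    set X : Ω → Bool := fun ω => (ξ ω (Sum.inr e)).1 with hX
    set X' : Ω → Bool := fun ω => (ξ' ω (Sum.inr e)).1 with hX'
    set IX : Ω → ℝ := fun ω => if X ω = true then 1 else 0 with hIX
    set IX' : Ω → ℝ := fun ω => if X' ω = true then 1 else 0 with hIX'
    -- measurability
    have mXi : Measurable (fun ω => ξ ω (Sum.inr e)) := hmeas (Sum.inr e)
    have mXi' : Measurable (fun ω => ξ' ω (Sum.inr e)) := hmeas' (Sum.inr e)
    have mX : Measurable X := measurable_fst.comp mXi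
    have mX' : Measurable X' := measurable_fst.comp mXi'
    have mb : Measurable (fun ω => (ξ ω (Sum.inr e)).2) := measurable_snd.comp mXi
    have mb' : Measurable (fun ω => (ξ' ω (Sum.inr e)).2) := measurable_snd.comp mXi'
    have mC : Measurable (fun ω => ξ ω (Sum.inl u)) := hmeas (Sum.inl u)
    have mD : Measurable (fun ω => ξ ω (Sum.inl v)) := hmeas (Sum.inl v)
    have mH₀ : Measurable H₀ := hHE.comp (mb.prodMk (mb'.prodMk (mC.prodMk mD)))
    have mG : Measurable G := mH₀.max measurable_const
    have mIX : Measurable IX := (Measurable.of_discrete (f := fun t : Bool => if t = true then (1:ℝ) else 0)).comp mX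
    have mIX' : Measurable IX' := (Measurable.of_discrete (f := fun t : Bool => if t = true then (1:ℝ) else 0)).comp mX'
    -- integrability
    have hG6le : ∀ ω, G ω ^ 6 ≤ H₀ ω ^ 6 := by
      intro ω
      rcases le_or_gt (H₀ ω) 0 with h | h
      · show (max (H₀ ω) 0) ^ 6 ≤ _
        rw [max_eq_right h]
        rw [show ((0:ℝ))^6 = 0 by norm_num]
        positivity
      · show (max (H₀ ω) 0) ^ 6 ≤ _
        rw [max_eq_left h.le]
    have hG6int : Integrable (fun ω => G ω ^ 6) P := by
      refine (hJEint e).mono ((mG.pow_const 6).aestronglyMeasurable) ?_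
      refine Filter.Eventually.of_forall fun ω => ?_
      rw [Real.norm_eq_abs, Real.norm_eq_abs, abs_of_nonneg (by positivity)]
      exact (hG6le ω).trans (le_abs_self _)
    have hG3int : Integrable (fun ω => G ω ^ 3) P := by
      refine ((integrable_const (1:ℝ)).add hG6int).mono
        ((mG.pow_const 3).aestronglyMeasurable) ?_
      refine Filter.Eventually.of_forall fun ω => ?_
      have hGnn : 0 ≤ G ω := le_max_right _ _
      rw [Real.norm_eq_abs, Real.norm_eq_abs, abs_of_nonneg (by positivity)]
      have : G ω ^ 3 ≤ 1 + G ω ^ 6 := by nlinarith [sq_nonneg (G ω ^ 3 - 1)]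
      exact this.trans (le_abs_self _)
    -- E[G^3] ≤ sqrt JE
    have hEG3nn : 0 ≤ ∫ ω, G ω ^ 3 ∂P :=
      integral_nonneg fun ω => by positivity
    have hEG3 : ∫ ω, G ω ^ 3 ∂P ≤ Real.sqrt JE := by
      have hmem : MemLp (fun ω => G ω ^ 3) 2 P := by
        rw [memLp_two_iff_integrable_sq ((mG.pow_const 3).aestronglyMeasurable)]
        have : (fun ω => (G ω ^ 3) ^ 2) = fun ω => G ω ^ 6 := by
          funext ω; ring
        rwa [this]
      have hvar := variance_nonneg (fun ω => G ω ^ 3) P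
      rw [variance_eq_sub hmem] at hvar
      have hsq : (∫ ω, G ω ^ 3 ∂P) ^ 2 ≤ ∫ ω, G ω ^ 6 ∂P := by
        have h2 : (P[(fun ω => G ω ^ 3) ^ 2]) = ∫ ω, G ω ^ 6 ∂P := by
          congr 1; funext ω; simp; ring
        rw [h2] at hvar; linarith
      have hle : ∫ ω, G ω ^ 6 ∂P ≤ JE := by
        refine le_trans ?_ (hJE e)
        exact integral_mono hG6int (hJEint e) hG6le
      calc ∫ ω, G ω ^ 3 ∂P = Real.sqrt ((∫ ω, G ω ^ 3 ∂P) ^ 2) :=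
            (Real.sqrt_sq hEG3nn).symm
        _ ≤ Real.sqrt JE := Real.sqrt_le_sqrt (by linarith)
    -- independence
    have hFmeas : ∀ i : Site n × Bool,
        Measurable (fun ω => if i.2 = true then ξ' ω i.1 else ξ ω i.1) := by
      rintro ⟨s, b⟩
      cases b
      · simpa using hmeas s
      · simpa using hmeas' s
    have hR : IndepFun (fun ω => ξ ω (Sum.inr e))
        (fun ω => ((ξ' ω (Sum.inr e)).2, ξ ω (Sum.inl u), ξ ω (Sum.inl v))) P := by
      classical
      set S : Finset (Site n × Bool) := {((Sum.inr e : Site n), false)} with hS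
      set T : Finset (Site n × Bool) := {((Sum.inr e : Site n), true),
        ((Sum.inl u : Site n), false), ((Sum.inl v : Site n), false)} with hT
      have hdisj : Disjoint S T := by simp [hS, hT, Finset.disjoint_left]
      have h := hindep.indepFun_finset S T hdisj hFmeas
      have m2 : ((Sum.inr e : Site n), true) ∈ T := Finset.mem_insert_self _ _
      have m3 : ((Sum.inl u : Site n), false) ∈ T :=
        Finset.mem_insert_of_mem (Finset.mem_insert_self _ _)
      have m4 : ((Sum.inl v : Site n), false) ∈ T :=
        Finset.mem_insert_of_mem (Finset.mem_insert_of_mem (Finset.mem_singleton_self _))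
      have m1 : ((Sum.inr e : Site n), false) ∈ S := Finset.mem_singleton_self _
      have mφ : Measurable (fun g : (∀ i : {x // x ∈ S}, SiteData n (↑i : Site n × Bool).1) =>
          g ⟨((Sum.inr e : Site n), false), m1⟩) := measurable_pi_apply _
      have c1 : Measurable (fun g : (∀ i : {x // x ∈ T}, SiteData n (↑i : Site n × Bool).1) =>
          ((g ⟨((Sum.inr e : Site n), true), m2⟩ : Bool × ℝ).2 : ℝ)) := by
        exact Measurable.comp measurable_snd (measurable_pi_apply _)
      have c2 : Measurable (fun g : (∀ i : {x // x ∈ T}, SiteData n (↑i : Site n × Bool).1) =>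
          (g ⟨((Sum.inl u : Site n), false), m3⟩ : ℝ)) := by
        exact measurable_pi_apply _
      have c3 : Measurable (fun g : (∀ i : {x // x ∈ T}, SiteData n (↑i : Site n × Bool).1) =>
          (g ⟨((Sum.inl v : Site n), false), m4⟩ : ℝ)) := by
        exact measurable_pi_apply _
      have h2 := h.comp mφ (c1.prodMk (c2.prodMk c3))
      simpa [Function.comp_def] using h2
    have hR' : IndepFun (fun ω => ξ' ω (Sum.inr e))
        (fun ω => ((ξ ω (Sum.inr e)).2, ξ ω (Sum.inl u), ξ ω (Sum.inl v))) P := by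
      classical
      set S : Finset (Site n × Bool) := {((Sum.inr e : Site n), true)} with hS
      set T : Finset (Site n × Bool) := {((Sum.inr e : Site n), false),
        ((Sum.inl u : Site n), false), ((Sum.inl v : Site n), false)} with hT
      have hdisj : Disjoint S T := by simp [hS, hT, Finset.disjoint_left]
      have h := hindep.indepFun_finset S T hdisj hFmeas
      have m2 : ((Sum.inr e : Site n), false) ∈ T := Finset.mem_insert_self _ _
      have m3 : ((Sum.inl u : Site n), false) ∈ T :=
        Finset.mem_insert_of_mem (Finset.mem_insert_self _ _)
      have m4 : ((Sum.inl v : Site n), false) ∈ T :=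
        Finset.mem_insert_of_mem (Finset.mem_insert_of_mem (Finset.mem_singleton_self _))
      have m1 : ((Sum.inr e : Site n), true) ∈ S := Finset.mem_singleton_self _
      have mφ : Measurable (fun g : (∀ i : {x // x ∈ S}, SiteData n (↑i : Site n × Bool).1) =>
          g ⟨((Sum.inr e : Site n), true), m1⟩) := measurable_pi_apply _
      have c1 : Measurable (fun g : (∀ i : {x // x ∈ T}, SiteData n (↑i : Site n × Bool).1) =>
          ((g ⟨((Sum.inr e : Site n), false), m2⟩ : Bool × ℝ).2 : ℝ)) := by
        exact Measurable.comp measurable_snd (measurable_pi_apply _)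
      have c2 : Measurable (fun g : (∀ i : {x // x ∈ T}, SiteData n (↑i : Site n × Bool).1) =>
          (g ⟨((Sum.inl u : Site n), false), m3⟩ : ℝ)) := by
        exact measurable_pi_apply _
      have c3 : Measurable (fun g : (∀ i : {x // x ∈ T}, SiteData n (↑i : Site n × Bool).1) =>
          (g ⟨((Sum.inl v : Site n), false), m4⟩ : ℝ)) := by
        exact measurable_pi_apply _
      have h2 := h.comp mφ (c1.prodMk (c2.prodMk c3))
      simpa [Function.comp_def] using h2
    have hXind : IndepFun X (fun ω => ((ξ ω (Sum.inr e)).2,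
        (ξ' ω (Sum.inr e)).2, ξ ω (Sum.inl u), ξ ω (Sum.inl v))) P :=
      indep_triple P mX mb (mb'.prodMk (mC.prodMk mD)) (hindepE e) hR
    have hX'ind : IndepFun X' (fun ω => ((ξ' ω (Sum.inr e)).2,
        (ξ ω (Sum.inr e)).2, ξ ω (Sum.inl u), ξ ω (Sum.inl v))) P :=
      indep_triple P mX' mb' (mb.prodMk (mC.prodMk mD)) (hindepE' e) hR'
    have hIXG : IndepFun IX (fun ω => G ω ^ 3) P := by
      have := hXind.comp (φ := fun t : Bool => if t = true then (1:ℝ) else 0)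
        (ψ := fun q : ℝ × ℝ × ℝ × ℝ => (max (HE q.1 q.2.1 q.2.2.1 q.2.2.2) 0) ^ 3)
        (Measurable.of_discrete)
        (((hHE.max measurable_const).pow_const 3))
      exact this
    have hIX'G : IndepFun IX' (fun ω => G ω ^ 3) P := by
      have := hX'ind.comp (φ := fun t : Bool => if t = true then (1:ℝ) else 0)
        (ψ := fun q : ℝ × ℝ × ℝ × ℝ => (max (HE q.2.1 q.1 q.2.2.1 q.2.2.2) 0) ^ 3)
        (Measurable.of_discrete)
        (by exact ((hHE.comp ((measurable_fst.comp measurable_snd).prodMk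
          (measurable_fst.prodMk (measurable_snd.comp measurable_snd)))).max
            measurable_const).pow_const 3)
      exact this
    -- indicator nonneg / bounded
    have hIXnn : ∀ ω, 0 ≤ IX ω := by
      intro ω; simp only [hIX]; split <;> norm_num
    have hIX'nn : ∀ ω, 0 ≤ IX' ω := by
      intro ω; simp only [hIX']; split <;> norm_num
    have hIXle1 : ∀ ω, ‖IX ω‖ ≤ 1 := by
      intro ω; simp only [hIX]; split <;> simp
    have hIX'le1 : ∀ ω, ‖IX' ω‖ ≤ 1 := by
      intro ω; simp only [hIX']; split <;> simp
    -- integral of indicators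
    have hIXint : ∫ ω, IX ω ∂P = min (W u * W v / (n * θ)) 1 := by
      have hseq : {ω | X ω = true} = X ⁻¹' {true} := by ext ω; simp
      have hs : MeasurableSet {ω | X ω = true} := by
        rw [hseq]; exact mX (measurableSet_singleton true)
      have hind : IX = Set.indicator {ω | X ω = true} (fun _ => (1:ℝ)) := by
        funext ω
        by_cases h : X ω = true <;> simp [hIX, h, Set.indicator]
      rw [hind]
      rw [show (Set.indicator {ω | X ω = true} (fun _ => (1:ℝ)))
          = Set.indicator {ω | X ω = true} (1 : Ω → ℝ) from rfl]
      rw [integral_indicator_one hs]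
      have : {ω | X ω = true} = {ω | (ξ ω (Sum.inr e)).1 = true} := rfl
      rw [this, measureReal_def, hBer e]
      exact ENNReal.toReal_ofReal (le_min (div_nonneg (mul_nonneg (hW u).le (hW v).le) hnθ.le) zero_le_one)
    have hIX'int : ∫ ω, IX' ω ∂P = min (W u * W v / (n * θ)) 1 := by
      have hseq : {ω | X' ω = true} = X' ⁻¹' {true} := by ext ω; simp
      have hs : MeasurableSet {ω | X' ω = true} := by
        rw [hseq]; exact mX' (measurableSet_singleton true)
      have hind : IX' = Set.indicator {ω | X' ω = true} (fun _ => (1:ℝ)) := by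
        funext ω
        by_cases h : X' ω = true <;> simp [hIX', h, Set.indicator]
      rw [hind]
      rw [show (Set.indicator {ω | X' ω = true} (fun _ => (1:ℝ)))
          = Set.indicator {ω | X' ω = true} (1 : Ω → ℝ) from rfl]
      rw [integral_indicator_one hs]
      have : {ω | X' ω = true} = {ω | (ξ' ω (Sum.inr e)).1 = true} := rfl
      rw [this, measureReal_def, hBer' e]
      exact ENNReal.toReal_ofReal (le_min (div_nonneg (mul_nonneg (hW u).le (hW v).le) hnθ.le) zero_le_one)
    -- product integrability
    have hprodint : Integrable (fun ω => IX ω * G ω ^ 3) P := by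
      refine hG3int.mono ((mIX.mul (mG.pow_const 3)).aestronglyMeasurable)
        (Filter.Eventually.of_forall fun ω => ?_)
      rw [norm_mul]
      exact mul_le_of_le_one_left (norm_nonneg _) (hIXle1 ω)
    have hprodint' : Integrable (fun ω => IX' ω * G ω ^ 3) P := by
      refine hG3int.mono ((mIX'.mul (mG.pow_const 3)).aestronglyMeasurable)
        (Filter.Eventually.of_forall fun ω => ?_)
      rw [norm_mul]
      exact mul_le_of_le_one_left (norm_nonneg _) (hIX'le1 ω)
    -- product integrals factorize
    have hprod : ∫ ω, IX ω * G ω ^ 3 ∂P = (∫ ω, IX ω ∂P) * ∫ ω, G ω ^ 3 ∂P := by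
      have := hIXG.integral_fun_mul_eq_mul_integral mIX.aestronglyMeasurable
        ((mG.pow_const 3).aestronglyMeasurable)
      exact this
    have hprod' : ∫ ω, IX' ω * G ω ^ 3 ∂P = (∫ ω, IX' ω ∂P) * ∫ ω, G ω ^ 3 ∂P := by
      have := hIX'G.integral_fun_mul_eq_mul_integral mIX'.aestronglyMeasurable
        ((mG.pow_const 3).aestronglyMeasurable)
      exact this
    -- pointwise bound
    have pointw : ∀ ω, |f (ξ ω) - f (recomb (ξ ω) (ξ' ω) {Sum.inr e})| ^ 3
        ≤ IX ω * G ω ^ 3 + IX' ω * G ω ^ 3 := by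
      intro ω
      have hd0 : 0 ≤ |f (ξ ω) - f (recomb (ξ ω) (ξ' ω) {Sum.inr e})| := abs_nonneg _
      have hb := hbound e ω
      have hGnn : 0 ≤ G ω := le_max_right _ _
      have hG3nn : 0 ≤ G ω ^ 3 := by positivity
      by_cases hc : (ξ ω (Sum.inr e)).1 = true ∨ (ξ' ω (Sum.inr e)).1 = true
      · rw [if_pos hc] at hb
        have hdG : |f (ξ ω) - f (recomb (ξ ω) (ξ' ω) {Sum.inr e})| ≤ G ω :=
          hb.trans (le_max_left _ _)
        have h3 : |f (ξ ω) - f (recomb (ξ ω) (ξ' ω) {Sum.inr e})| ^ 3 ≤ G ω ^ 3 :=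
          pow_le_pow_left₀ hd0 hdG 3
        have hge : (1:ℝ) ≤ IX ω + IX' ω := by
          rcases hc with h | h
          · have h1 : IX ω = 1 := by simp [hIX, hX, h]
            have := hIX'nn ω
            linarith
          · have h1 : IX' ω = 1 := by simp [hIX', hX', h]
            have := hIXnn ω
            linarith
        nlinarith [h3, hG3nn, hge]
      · rw [if_neg hc] at hb
        have h0 : |f (ξ ω) - f (recomb (ξ ω) (ξ' ω) {Sum.inr e})| = 0 :=
          le_antisymm hb hd0
        rw [h0, show ((0:ℝ)) ^ 3 = 0 by norm_num]
        exact add_nonneg (mul_nonneg (hIXnn ω) hG3nn) (mul_nonneg (hIX'nn ω) hG3nn)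
    have hsJE : (0:ℝ) ≤ Real.sqrt JE := Real.sqrt_nonneg _
    set m := min (W u * W v / (n * θ)) 1 with hm
    have hmnn : 0 ≤ m := le_min (div_nonneg (mul_nonneg (hW u).le (hW v).le) hnθ.le) zero_le_one
    have hmle : m ≤ W u * W v / ((n:ℝ) * θ) := min_le_left _ _
    calc ∫ ω, |f (ξ ω) - f (recomb (ξ ω) (ξ' ω) {Sum.inr e})| ^ 3 ∂P
        ≤ ∫ ω, (IX ω * G ω ^ 3 + IX' ω * G ω ^ 3) ∂P := by
          refine integral_mono_of_nonneg
            (Filter.Eventually.of_forall fun ω => by positivity)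
            (hprodint.add hprodint')
            (Filter.Eventually.of_forall pointw)
      _ = (∫ ω, IX ω ∂P) * (∫ ω, G ω ^ 3 ∂P)
          + (∫ ω, IX' ω ∂P) * (∫ ω, G ω ^ 3 ∂P) := by
          rw [integral_add hprodint hprodint', hprod, hprod']
      _ = (m + m) * (∫ ω, G ω ^ 3 ∂P) := by rw [hIXint, hIX'int]; ring
      _ ≤ 2 * (W u * W v / (n * θ)) * Real.sqrt JE := by
          have h1 : (m + m) * (∫ ω, G ω ^ 3 ∂P) ≤ (m + m) * Real.sqrt JE :=
            mul_le_mul_of_nonneg_left hEG3 (by linarith)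
          have h2 : (m + m) * Real.sqrt JE
              ≤ (W u * W v / ((n:ℝ) * θ) + W u * W v / ((n:ℝ) * θ)) * Real.sqrt JE :=
            mul_le_mul_of_nonneg_right (by linarith) hsJE
          calc (m + m) * (∫ ω, G ω ^ 3 ∂P) ≤ _ := h1
            _ ≤ _ := h2
            _ = 2 * (W u * W v / (n * θ)) * Real.sqrt JE := by ring
  have hsum : ∑ e : EdgeIdx n, W e.1.1 * W e.1.2 ≤ (∑ u : Fin n, W u) ^ 2 / 2 := by
    classical
    set A : Finset (Fin n × Fin n) :=
      Finset.univ.filter (fun p : Fin n × Fin n => p.1 < p.2) with hA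
    set B : Finset (Fin n × Fin n) :=
      Finset.univ.filter (fun p : Fin n × Fin n => p.2 < p.1) with hB
    have h1 : ∑ e : EdgeIdx n, W e.1.1 * W e.1.2
        = ∑ p ∈ A, W p.1 * W p.2 :=
      (Finset.sum_subtype A (by simp [hA]) (fun p => W p.1 * W p.2)).symm
    have h2 : ∑ p ∈ A, W p.1 * W p.2 = ∑ p ∈ B, W p.1 * W p.2 := by
      refine Finset.sum_nbij' (fun p => p.swap) (fun p => p.swap) ?_ ?_ ?_ ?_ ?_ <;>
        simp [hA, hB, mul_comm]
    have hdisj : Disjoint A B := by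
      rw [Finset.disjoint_left]
      intro p hp hq
      simp [hA, hB] at hp hq
      exact absurd hq (not_lt.2 hp.le)
    have h3 : ∑ p ∈ A, W p.1 * W p.2 + ∑ p ∈ B, W p.1 * W p.2
        = ∑ p ∈ A ∪ B, W p.1 * W p.2 := (Finset.sum_union hdisj).symm
    have h4 : ∑ p ∈ A ∪ B, W p.1 * W p.2
        ≤ ∑ p : Fin n × Fin n, W p.1 * W p.2 := by
      refine Finset.sum_le_sum_of_subset_of_nonneg (Finset.subset_univ _) ?_
      intro p _ _
      exact le_of_lt (mul_pos (hW _) (hW _))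
    have h5 : ∑ p : Fin n × Fin n, W p.1 * W p.2 = (∑ u : Fin n, W u) ^ 2 := by
      rw [Fintype.sum_prod_type]
      simp_rw [← Finset.mul_sum, ← Finset.sum_mul, sq]
    nlinarith [h1, h2, h3, h4, h5]
  calc ∑ e : EdgeIdx n, ∫ ω, |f (ξ ω) - f (recomb (ξ ω) (ξ' ω) {Sum.inr e})| ^ 3 ∂P
      ≤ ∑ e : EdgeIdx n, 2 * (W e.1.1 * W e.1.2 / (n * θ)) * Real.sqrt JE :=
        Finset.sum_le_sum fun e _ => key e
    _ = (∑ e : EdgeIdx n, W e.1.1 * W e.1.2) * (2 * Real.sqrt JE / (n * θ)) := by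
        rw [Finset.sum_mul]
        exact Finset.sum_congr rfl fun e _ => by ring
    _ ≤ ((∑ u : Fin n, W u) ^ 2 / 2) * (2 * Real.sqrt JE / (n * θ)) := by
        refine mul_le_mul_of_nonneg_right hsum ?_
        positivity
    _ ≤ 2 * n * θ * Gam n θ W 1 ^ 2 * Real.sqrt JE := by
        have hG : Gam n θ W 1 = (∑ u : Fin n, W u) / (n * θ) := by
          simp [Gam, Real.rpow_one]
        rw [hG]
        set S := ∑ u : Fin n, W u
        have hS : 0 ≤ S := Finset.sum_nonneg fun u _ => (hW u).le
        have h1 : (S ^ 2 / 2) * (2 * Real.sqrt JE / (n * θ))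
            = S ^ 2 * Real.sqrt JE / (n * θ) := by field_simp
        have h2 : 2 * (n:ℝ) * θ * (S / (n * θ)) ^ 2 * Real.sqrt JE
            = 2 * (S ^ 2 * Real.sqrt JE / (n * θ)) := by field_simp
        rw [h1, h2]
        nlinarith [div_nonneg (mul_nonneg (sq_nonneg S) hsJE) hnθ.le]
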